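/- arXiv:2304.11429 — 2 statements merged into one kernel-verified Lean document; each statement's English description precedes it below -/
import Mathlib

section
/- Let R be a finite nonempty set of n rays in the plane. Then the Brocard angle of the plane induced by R satisfies sSup { min_{r ∈ R} d∠(x, r) : x ∈ ℝ² } ≥ 2π/n. -/
noncomputable section

open Real

abbrev Pt : Type := EuclideanSpace ℝ (Fin 2)

instance : Fact (Module.finrank ℝ Pt = 2) := ⟨finrank_euclideanSpace_fin⟩

noncomputable def stdOrient : Orientation ℝ Pt (Fin 2) :=
  (EuclideanSpace.basisFun (Fin 2) ℝ).toBasis.orientation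

/-- A ray in the plane, given by its apex and its direction vector. -/
structure Ray2 where
  apex : Pt
  dir : Pt

/-- The set of points of a ray. -/
def Ray2.carrier (r : Ray2) : Set Pt := {x | ∃ t : ℝ, 0 ≤ t ∧ x = r.apex + t • r.dir}

/-- The representative in `[0, 2π)` of an angle. -/
noncomputable def angleIco (θ : Real.Angle) : ℝ :=
  if 0 ≤ θ.toReal then θ.toReal else θ.toReal + 2 * π

open Classical in
/-- The counterclockwise angular distance from a point `x` to a ray `r`. -/
noncomputable def adist (x : Pt) (r : Ray2) : ℝ :=
  if x = r.apex then 0 else angleIco (stdOrient.oangle r.dir (x - r.apex))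

/-- The Voronoi region of a ray `r` in a finite set of rays `R`. -/
def rreg (R : Finset Ray2) (r : Ray2) : Set Pt :=
  {x | ∀ s ∈ R, s ≠ r → adist x r < adist x s}

/-- The rotating rays Voronoi diagram. -/
def RVD (R : Finset Ray2) : Set Pt :=
  (Set.univ \ ⋃ r ∈ R, rreg R r) ∪ ⋃ r ∈ R, r.carrier

/-- The point of the plane with the given coordinates. -/
noncomputable def pt (a b : ℝ) : Pt := (WithLp.equiv 2 (Fin 2 → ℝ)).symm ![a, b]

lemma angleIco_mem (θ : Real.Angle) : angleIco θ ∈ Set.Ico 0 (2*π) := by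
  have h1 := θ.toReal_le_pi
  have h2 := θ.neg_pi_lt_toReal
  have hπ := Real.pi_pos
  unfold angleIco
  split <;> constructor <;> linarith

lemma coe_angleIco (θ : Real.Angle) : ((angleIco θ : ℝ) : Real.Angle) = θ := by
  unfold angleIco
  split
  · exact θ.coe_toReal
  · rw [Real.Angle.coe_add, Real.Angle.coe_two_pi, add_zero, θ.coe_toReal]

lemma angleIco_coe {a : ℝ} (h0 : 0 ≤ a) (h2 : a < 2*π) : angleIco ((a : ℝ) : Real.Angle) = a := by
  have hπ := Real.pi_pos
  rcases le_or_gt a π with h | h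
  · have ht : ((a : ℝ) : Real.Angle).toReal = a :=
      Real.Angle.toReal_coe_eq_self_iff.2 ⟨by linarith, h⟩
    unfold angleIco; rw [ht]; simp [h0]
  · have he : ((a : ℝ) : Real.Angle) = ((a - 2*π : ℝ) : Real.Angle) := by
      rw [Real.Angle.coe_sub, Real.Angle.coe_two_pi, sub_zero]
    have ht : ((a : ℝ) : Real.Angle).toReal = a - 2*π := by
      rw [he]; exact Real.Angle.toReal_coe_eq_self_iff.2 ⟨by linarith, by linarith⟩
    unfold angleIco; rw [ht]
    have hneg : ¬ (0 ≤ a - 2*π) := by linarith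
    simp only [hneg, if_false]; ring

lemma angleIco_add_small {α γ : Real.Angle}
    (h1 : |γ.toReal| < angleIco α) (h2 : angleIco α + |γ.toReal| < 2*π) :
    angleIco (α + γ) = angleIco α + γ.toReal := by
  have h := angleIco_mem α
  have hg1 : γ.toReal ≤ |γ.toReal| := le_abs_self _
  have hg2 : -|γ.toReal| ≤ γ.toReal := neg_abs_le _
  have key : α + γ = ((angleIco α + γ.toReal : ℝ) : Real.Angle) := by
    rw [Real.Angle.coe_add, coe_angleIco, Real.Angle.coe_toReal]
  rw [key, angleIco_coe (by linarith) (by linarith)]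

open MeasureTheory Filter in
lemma exists_point (R : Finset Ray2) (hR : R.Nonempty) (hdir : ∀ r ∈ R, r.dir ≠ 0)
    {c : ℝ} (hc0 : 0 < c) (hc : c < 2 * π / R.card) :
    ∃ x : Pt, ∀ r ∈ R, c < adist x r := by
  have hπ := Real.pi_pos
  have hn : (0:ℝ) < R.card := by
    exact_mod_cast Finset.card_pos.2 hR
  set c'' : ℝ := (c + 2 * π / R.card) / 2 with hc''def
  have hcc1 : c < c'' := by simp only [hc''def]; linarith
  have hcc2 : (R.card : ℝ) * c'' < 2 * π := by
    have : c'' < 2 * π / R.card := by simp only [hc''def]; linarith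
    calc (R.card : ℝ) * c'' < (R.card : ℝ) * (2 * π / R.card) := by
          exact mul_lt_mul_of_pos_left this hn
      _ = 2 * π := by field_simp
  have hc''0 : 0 < c'' := by linarith
  -- the reference vector
  set e : Pt := EuclideanSpace.single (0 : Fin 2) (1:ℝ) with hedef
  have he : e ≠ 0 := by
    intro h
    have := congrArg (fun v : Pt => v 0) h
    simp [hedef, EuclideanSpace.single_apply] at this
  set β : Ray2 → ℝ := fun r => angleIco (stdOrient.oangle r.dir e) with hβdef
  have hβ : ∀ r, β r ∈ Set.Ico 0 (2*π) := fun r => angleIco_mem _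
  -- the bad sets
  set B : Ray2 → Set ℝ := fun r =>
    Set.Ico (-(β r)) (c'' - β r) ∪ Set.Ico (2*π - β r) (2*π + c'' - β r) with hBdef
  have hvol : ∀ r, volume (Set.Ico (0:ℝ) (2*π) ∩ B r) ≤ ENNReal.ofReal c'' := by
    intro r
    have hβ0 := (hβ r).1
    have hβ2 := (hβ r).2
    have hsub : Set.Ico (0:ℝ) (2*π) ∩ B r ⊆
        Set.Ico (0:ℝ) (c'' - β r) ∪ Set.Ico (2*π - β r) (2*π) := by
      rintro x ⟨⟨hx0, hx2⟩, hxB⟩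
      rcases hxB with ⟨h1, h2⟩ | ⟨h1, h2⟩
      · exact Or.inl ⟨hx0, h2⟩
      · exact Or.inr ⟨h1, hx2⟩
    rcases le_or_gt (β r) c'' with h | h
    · calc volume (Set.Ico (0:ℝ) (2*π) ∩ B r)
          ≤ volume (Set.Ico (0:ℝ) (c'' - β r) ∪ Set.Ico (2*π - β r) (2*π)) :=
            measure_mono hsub
        _ ≤ volume (Set.Ico (0:ℝ) (c'' - β r)) + volume (Set.Ico (2*π - β r) (2*π)) :=
            measure_union_le _ _
        _ = ENNReal.ofReal (c'' - β r) + ENNReal.ofReal (β r) := by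
            rw [Real.volume_Ico, Real.volume_Ico]
            congr 1 <;> congr 1 <;> ring
        _ ≤ ENNReal.ofReal c'' := by
            rw [← ENNReal.ofReal_add (by linarith) hβ0]
            simp
    · have hsub2 : Set.Ico (0:ℝ) (2*π) ∩ B r ⊆
          Set.Ico (0:ℝ) (c'' - β r) ∪ Set.Ico (2*π - β r) (2*π + c'' - β r) := by
        rintro x ⟨⟨hx0, hx2⟩, hxB⟩
        rcases hxB with ⟨h1, h2⟩ | ⟨h1, h2⟩
        · exact Or.inl ⟨hx0, h2⟩
        · exact Or.inr ⟨h1, h2⟩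
      calc volume (Set.Ico (0:ℝ) (2*π) ∩ B r)
          ≤ volume (Set.Ico (0:ℝ) (c'' - β r) ∪ Set.Ico (2*π - β r) (2*π + c'' - β r)) :=
            measure_mono hsub2
        _ ≤ volume (Set.Ico (0:ℝ) (c'' - β r)) +
              volume (Set.Ico (2*π - β r) (2*π + c'' - β r)) := measure_union_le _ _
        _ = ENNReal.ofReal (c'' - β r) + ENNReal.ofReal c'' := by
            rw [Real.volume_Ico, Real.volume_Ico]
            congr 1 <;> congr 1 <;> ring
        _ ≤ ENNReal.ofReal c'' := by
            rw [ENNReal.ofReal_eq_zero.2 (by linarith : c'' - β r ≤ 0), zero_add]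
  -- total measure bound and choice of φ
  have hunion : volume (Set.Ico (0:ℝ) (2*π) ∩ ⋃ r ∈ R, B r) ≤ ENNReal.ofReal (R.card * c'') := by
    rw [Set.inter_iUnion₂]
    calc volume (⋃ r ∈ R, Set.Ico (0:ℝ) (2*π) ∩ B r)
        ≤ ∑ r ∈ R, volume (Set.Ico (0:ℝ) (2*π) ∩ B r) := measure_biUnion_finset_le _ _
      _ ≤ ∑ _r ∈ R, ENNReal.ofReal c'' := Finset.sum_le_sum fun r _ => hvol r
      _ = R.card • ENNReal.ofReal c'' := by rw [Finset.sum_const]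
      _ = ENNReal.ofReal (R.card * c'') := by
          rw [nsmul_eq_mul, ← ENNReal.ofReal_natCast, ← ENNReal.ofReal_mul (by positivity)]
  have hne : (Set.Ico (0:ℝ) (2*π) \ ⋃ r ∈ R, B r).Nonempty := by
    by_contra h
    rw [Set.not_nonempty_iff_eq_empty, Set.diff_eq_empty] at h
    have heq : Set.Ico (0:ℝ) (2*π) ∩ ⋃ r ∈ R, B r = Set.Ico (0:ℝ) (2*π) :=
      Set.inter_eq_left.2 h
    have hIv : volume (Set.Ico (0:ℝ) (2*π)) = ENNReal.ofReal (2*π) := by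
      rw [Real.volume_Ico]; norm_num
    have : ENNReal.ofReal (2*π) ≤ ENNReal.ofReal (R.card * c'') := by
      rw [← hIv, ← heq]
      exact hunion
    rw [ENNReal.ofReal_le_ofReal_iff (by positivity)] at this
    linarith
  obtain ⟨φ, hφIco, hφB⟩ := hne
  simp only [Set.mem_iUnion, not_exists, exists_prop, not_and] at hφB
  obtain ⟨hφ0, hφ2⟩ := hφIco
  -- the direction w
  set w : Pt := stdOrient.rotation ((φ : ℝ) : Real.Angle) e with hwdef
  have hw : w ≠ 0 := by
    simp only [hwdef]
    intro h
    exact he ((stdOrient.rotation ((φ : ℝ) : Real.Angle)).map_eq_zero_iff.1 h)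
  -- key angle bound
  have key : ∀ r ∈ R, c'' ≤ angleIco (stdOrient.oangle r.dir w) := by
    intro r hr
    have hu := hdir r hr
    have h1 : stdOrient.oangle r.dir w = ((β r + φ : ℝ) : Real.Angle) := by
      rw [← stdOrient.oangle_add hu he hw, hwdef, stdOrient.oangle_rotation_self_right he,
        show stdOrient.oangle r.dir e = ((β r : ℝ) : Real.Angle) from (coe_angleIco _).symm,
        ← Real.Angle.coe_add]
    have hnB := hφB r hr
    simp only [hBdef, Set.mem_union, Set.mem_Ico, not_or, not_and, not_lt] at hnB
    obtain ⟨hnB1, hnB2⟩ := hnB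
    have hβ0 := (hβ r).1
    have hβ2 := (hβ r).2
    rcases lt_or_ge (β r + φ) (2*π) with hcase | hcase
    · have := hnB1 (by linarith)
      rw [h1, angleIco_coe (by linarith) hcase]
      linarith
    · have := hnB2 (by linarith)
      have h2 : ((β r + φ : ℝ) : Real.Angle) = ((β r + φ - 2*π : ℝ) : Real.Angle) := by
        rw [Real.Angle.coe_sub, Real.Angle.coe_two_pi, sub_zero]
      rw [h1, h2, angleIco_coe (by linarith) (by linarith)]
      linarith
  -- limit argument: eventually far points work
  have hev : ∀ r ∈ R, ∀ᶠ t : ℝ in atTop, c < adist (t • w) r := by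
    intro r hr
    have hu := hdir r hr
    set a : ℝ := angleIco (stdOrient.oangle r.dir w) with hadef
    have ha1 : c'' ≤ a := key r hr
    have ha2 : a < 2*π := (angleIco_mem _).2
    set δ : ℝ := min (c'' - c) (2*π - a) with hδdef
    have hδ : 0 < δ := lt_min (by linarith) (by linarith)
    have hv : Tendsto (fun t : ℝ => w - t⁻¹ • r.apex) atTop (nhds w) := by
      have h0 : Tendsto (fun t : ℝ => t⁻¹) atTop (nhds 0) := tendsto_inv_atTop_zero
      have h1 := h0.smul_const r.apex
      rw [zero_smul] at h1
      simpa using tendsto_const_nhds.sub h1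
    have hang : Tendsto (fun t : ℝ => InnerProductGeometry.angle w (w - t⁻¹ • r.apex))
        atTop (nhds 0) := by
      have hca : ContinuousAt (fun y : Pt × Pt => InnerProductGeometry.angle y.1 y.2) (w, w) :=
        InnerProductGeometry.continuousAt_angle hw hw
      have := hca.tendsto.comp (tendsto_const_nhds.prodMk_nhds hv)
      simpa [InnerProductGeometry.angle_self hw, Function.comp_def] using this
    have h1 : ∀ᶠ t : ℝ in atTop, InnerProductGeometry.angle w (w - t⁻¹ • r.apex) < δ :=
      hang.eventually (gt_mem_nhds hδ)
    have h2 : ∀ᶠ t : ℝ in atTop, w - t⁻¹ • r.apex ≠ 0 := hv.eventually_ne hw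
    filter_upwards [h1, h2, eventually_gt_atTop (0:ℝ)] with t hlt hvne ht
    set v : Pt := w - t⁻¹ • r.apex with hvdef
    have htw : t • w - r.apex = t • v := by
      simp only [hvdef, smul_sub, smul_smul, mul_inv_cancel₀ ht.ne', one_smul]
    have hxne : t • w ≠ r.apex := by
      intro h
      apply hvne
      have h0 : t • v = 0 := by rw [← htw, h, sub_self]
      rcases smul_eq_zero.1 h0 with h' | h'
      · exact absurd h' ht.ne'
      · exact h'
    have hγ : |(stdOrient.oangle w v).toReal| < δ := by
      rw [← stdOrient.angle_eq_abs_oangle_toReal hw hvne]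
      exact hlt
    rw [adist, if_neg hxne, htw, stdOrient.oangle_smul_right_of_pos _ _ ht,
      ← stdOrient.oangle_add hu hw hvne,
      angleIco_add_small (by rw [← hadef]; calc |(stdOrient.oangle w v).toReal| < δ := hγ
          _ ≤ c'' - c := min_le_left _ _
          _ < a := by linarith)
        (by rw [← hadef]
            have : |(stdOrient.oangle w v).toReal| < 2*π - a :=
              lt_of_lt_of_le hγ (min_le_right _ _)
            linarith), ← hadef]
    have hg2 : -|(stdOrient.oangle w v).toReal| ≤ (stdOrient.oangle w v).toReal := neg_abs_le _
    have hstrict : |(stdOrient.oangle w v).toReal| < c'' - c :=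
      lt_of_lt_of_le hγ (min_le_left _ _)
    linarith
  have hall : ∀ᶠ t : ℝ in atTop, ∀ r ∈ R, c < adist (t • w) r := by
    rw [Filter.eventually_all_finset]
    exact hev
  obtain ⟨t, ht⟩ := hall.exists
  exact ⟨t • w, ht⟩

lemma adist_lt_two_pi (x : Pt) (r : Ray2) : adist x r < 2*π := by
  unfold adist
  split
  · linarith [Real.pi_pos]
  · exact (angleIco_mem _).2


/-- the Brocard angle of the plane induced by `n` rays is at least `2π/n`. -/
theorem stmt5 (R : Finset Ray2) (hR : R.Nonempty) (hdir : ∀ r ∈ R, r.dir ≠ 0) :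
    2 * π / R.card ≤ sSup {y : ℝ | ∃ x : Pt, y = R.inf' hR fun r => adist x r} := by
  have hπ := Real.pi_pos
  have hn : (0:ℝ) < R.card := by exact_mod_cast Finset.card_pos.2 hR
  set S := {y : ℝ | ∃ x : Pt, y = R.inf' hR fun r => adist x r} with hS
  have hbdd : BddAbove S := by
    refine ⟨2*π, ?_⟩
    rintro y ⟨x, rfl⟩
    obtain ⟨r, hr⟩ := hR
    exact le_trans (Finset.inf'_le _ hr) (adist_lt_two_pi x r).le
  by_contra hlt
  push_neg at hlt
  have h2πn : 0 < 2*π/R.card := by positivity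
  set c : ℝ := (max (sSup S) 0 + 2*π/R.card)/2 with hcdef
  have hmax : max (sSup S) 0 < 2*π/R.card := max_lt hlt h2πn
  have hc0 : 0 < c := by
    have : (0:ℝ) ≤ max (sSup S) 0 := le_max_right _ _
    simp only [hcdef]; linarith
  have hcc : c < 2*π/R.card := by simp only [hcdef]; linarith
  obtain ⟨x, hx⟩ := exists_point R hR hdir hc0 hcc
  have hy : R.inf' hR (fun r => adist x r) ∈ S := ⟨x, rfl⟩
  have h1 : c ≤ R.inf' hR (fun r => adist x r) := Finset.le_inf' _ _ fun r hr => (hx r hr).le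
  have h2 : R.inf' hR (fun r => adist x r) ≤ sSup S := le_csSup hbdd hy
  have h3 : sSup S ≤ max (sSup S) 0 := le_max_left _ _
  have : sSup S < c := by simp only [hcdef]; linarith
  linarith
end
end

section
/- Let n ≥ 3 and, for 0 ≤ k < n, let v_k = (cos(2πk/n), sin(2πk/n)) be the vertices of a regular n-gon inscribed in the unit circle, and let r_k be the ray with apex v_k and direction v_{k+1} − v_k (indices modulo n). Then the angular distance from each edge-aligned ray to the center equals π/2 − π/n, i.e., d∠(0, r_k) = π/2 − π/n for every k. (Hence the upper bound π/2 − π/n for the Brocard angle of a convex n-gon is attained by regular polygons, at their center.) -/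
noncomputable section

open Real

lemma inner_pt (a b c d : ℝ) : (inner ℝ (pt a b) (pt c d) : ℝ) = a*c + b*d := by
  simp [pt, PiLp.inner_apply, Fin.sum_univ_two, mul_comm]

lemma area_pt (a b c d : ℝ) : stdOrient.areaForm (pt a b) (pt c d) = a*d - b*c := by
  rw [Orientation.areaForm_to_volumeForm,
    stdOrient.volumeForm_robust (EuclideanSpace.basisFun (Fin 2) ℝ) rfl]
  simp [Module.Basis.det_apply, Matrix.det_fin_two, Module.Basis.toMatrix, pt]
  ring

lemma pt_sub (a b c d : ℝ) : pt a b - pt c d = pt (a-c) (b-d) := by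
  ext i
  fin_cases i <;> simp [pt]

lemma pt_zero : pt 0 0 = 0 := by
  ext i; fin_cases i <;> simp [pt]

/-- for the regular `n`-gon inscribed in the unit circle, the angular distance
from each edge-aligned ray to the center is `π/2 - π/n`. -/
theorem stmt15 (n : ℕ) (hn : 3 ≤ n) (k : ℕ) (hk : k < n) :
    adist 0
      ⟨pt (cos (2 * π * k / n)) (sin (2 * π * k / n)),
        pt (cos (2 * π * (k + 1) / n)) (sin (2 * π * (k + 1) / n)) -
          pt (cos (2 * π * k / n)) (sin (2 * π * k / n))⟩ =
      π / 2 - π / n := by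
  have hn0 : (n:ℝ) ≠ 0 := by positivity
  have hn3 : (3:ℝ) ≤ n := by exact_mod_cast hn
  set θ : ℝ := 2 * π * k / n with hθ
  set θ' : ℝ := 2 * π * (k + 1) / n with hθ'
  have hδ : θ' - θ = 2 * π / n := by rw [hθ, hθ', ← sub_div]; congr 1; ring
  have hπn_pos : 0 < π / n := by positivity
  have hπn_lt : π / n < π / 2 := by
    rw [div_lt_div_iff₀ (by positivity) (by norm_num)]
    nlinarith [pi_pos]
  have hπn_lt_pi : π / n < π := by linarith
  have hα_pos : 0 < π / 2 - π / n := by linarith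
  have hα_le : π / 2 - π / n ≤ π := by linarith [pi_pos]
  have hα_gt : -π < π / 2 - π / n := by linarith [pi_pos]
  have hsinpos : 0 < sin (π / n) := sin_pos_of_pos_of_lt_pi hπn_pos hπn_lt_pi
  have hapex : (0:Pt) ≠ pt (cos θ) (sin θ) := by
    intro h
    have h0 : (0:ℝ) = cos θ := congrFun (congrArg (WithLp.equiv 2 (Fin 2 → ℝ)) h) 0
    have h1 : (0:ℝ) = sin θ := congrFun (congrArg (WithLp.equiv 2 (Fin 2 → ℝ)) h) 1
    have := sin_sq_add_cos_sq θ
    rw [← h0, ← h1] at this; norm_num at this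
  rw [adist, if_neg hapex]
  have hsub : (0:Pt) - pt (cos θ) (sin θ) = pt (-cos θ) (-sin θ) := by
    rw [← pt_zero, pt_sub]; ring_nf
  have hdir : pt (cos θ') (sin θ') - pt (cos θ) (sin θ) = pt (cos θ' - cos θ) (sin θ' - sin θ) :=
    pt_sub _ _ _ _
  rw [hsub, hdir]
  have hkahler : stdOrient.kahler (pt (cos θ' - cos θ) (sin θ' - sin θ)) (pt (-cos θ) (-sin θ))
      = ((2 * sin (π/n) : ℝ) : ℂ) *
        (Complex.cos ((π/2 - π/n : ℝ) : ℂ) + Complex.sin ((π/2 - π/n : ℝ) : ℂ) * Complex.I) := by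
    rw [Orientation.kahler_apply_apply, inner_pt, area_pt]
    have hre : (cos θ' - cos θ) * -cos θ + (sin θ' - sin θ) * -sin θ = 1 - cos (θ' - θ) := by
      rw [cos_sub]; nlinarith [sin_sq_add_cos_sq θ]
    have him : (cos θ' - cos θ) * -sin θ - (sin θ' - sin θ) * -cos θ = sin (θ' - θ) := by
      rw [sin_sub]; ring
    rw [hre, him, hδ]
    have h2 : 2 * π / (n:ℝ) = 2 * (π / n) := by ring
    rw [h2, cos_two_mul', sin_two_mul, ← Complex.ofReal_cos, ← Complex.ofReal_sin,
      cos_pi_div_two_sub, sin_pi_div_two_sub]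
    have h3 : 1 - (cos (π/n)^2 - sin (π/n)^2) = 2 * sin (π/n) * sin (π/n) := by
      nlinarith [sin_sq_add_cos_sq (π/n)]
    rw [h3, Complex.real_smul]
    push_cast
    ring
  rw [Orientation.oangle, hkahler,
    Complex.arg_mul_cos_add_sin_mul_I (by positivity) ⟨hα_gt, hα_le⟩]
  rw [angleIco, Real.Angle.toReal_coe_eq_self_iff.2 ⟨hα_gt, hα_le⟩, if_pos hα_pos.le]
end
end
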